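/- For any graph G and any vertex v of G, box(G) ≤ box(G − v) + 1, where G − v is the graph obtained by deleting v. -/

import Mathlib

open SimpleGraph

/-- A graph is an interval graph if it is the intersection graph of closed
intervals of the real line. -/
def IsIntervalGraph {V : Type*} (G : SimpleGraph V) : Prop :=
  ∃ I : V → Set ℝ, (∀ v, ∃ a b : ℝ, I v = Set.Icc a b) ∧
    ∀ u v : V, u ≠ v → (G.Adj u v ↔ (I u ∩ I v).Nonempty)

/-- `G` is the intersection of `k` interval graphs on the same vertex set. -/
def HasBoxicityLE {V : Type*} (G : SimpleGraph V) (k : ℕ) : Prop :=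
  ∃ f : Fin k → SimpleGraph V, (∀ i, IsIntervalGraph (f i)) ∧
    ∀ u v : V, G.Adj u v ↔ ∀ i, (f i).Adj u v

/-- The boxicity of `G`: the least `k` such that `G` is the intersection of
`k` interval graphs on its vertex set. -/
noncomputable def boxicity {V : Type*} (G : SimpleGraph V) : ℕ :=
  sInf {k | HasBoxicityLE G k}

/-- complete graph minus (possibly) one edge -/
def minusEdge {V : Type*} (a b : V) : SimpleGraph V where
  Adj u w := u ≠ w ∧ ¬((u = a ∧ w = b) ∨ (u = b ∧ w = a))
  symm := ⟨by intro u w h; exact ⟨h.1.symm, by tauto⟩⟩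
  loopless := ⟨fun u h => h.1 rfl⟩

lemma minusEdge_adj {V : Type*} (a b u w : V) :
    (minusEdge a b).Adj u w ↔ u ≠ w ∧ ¬((u = a ∧ w = b) ∨ (u = b ∧ w = a)) := Iff.rfl

lemma icc01_icc23 : (Set.Icc (0:ℝ) 1 ∩ Set.Icc 2 3) = ∅ := by
  ext x; simp only [Set.mem_inter_iff, Set.mem_Icc, Set.mem_empty_iff_false, iff_false]
  rintro ⟨⟨_, h1⟩, ⟨h2, _⟩⟩; linarith

lemma minusEdge_interval {V : Type*} (a b : V) : IsIntervalGraph (minusEdge a b) := by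
  classical
  refine ⟨fun u => if u = a then Set.Icc 0 1 else if u = b then Set.Icc 2 3 else Set.Icc 0 3,
    fun u => by
      by_cases h1 : u = a
      · exact ⟨0, 1, if_pos h1⟩
      · by_cases h2 : u = b
        · refine ⟨2, 3, ?_⟩; dsimp only; rw [if_neg h1, if_pos h2]
        · refine ⟨0, 3, ?_⟩; dsimp only; rw [if_neg h1, if_neg h2], ?_⟩
  intro u w huw
  rw [minusEdge_adj]
  dsimp only
  split_ifs <;>
    (constructor
     · intro hadj
       first
         | (refine ⟨0, ?_⟩; norm_num [Set.mem_Icc]; done)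
         | (refine ⟨2, ?_⟩; norm_num [Set.mem_Icc]; done)
         | (exfalso; refine hadj.2 ?_; clear hadj; simp_all)
     · rintro ⟨x, hx1, hx2⟩
       refine ⟨huw, ?_⟩
       first
         | (simp_all; done)
         | (exfalso
            linarith [hx1.1, hx1.2, hx2.1, hx2.2]))


lemma exists_hasBoxicityLE {V : Type*} [Fintype V] (G : SimpleGraph V) :
    ∃ k, HasBoxicityLE G k := by
  classical
  refine ⟨Fintype.card (V × V), ?_⟩
  set e := (Fintype.equivFin (V × V)).symm with he
  refine ⟨fun i => if G.Adj (e i).1 (e i).2 then minusEdge (e i).1 (e i).1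
      else minusEdge (e i).1 (e i).2,
    fun i => by dsimp only; split <;> apply minusEdge_interval, ?_⟩
  intro u w
  constructor
  · intro hadj i
    have hne : u ≠ w := hadj.ne
    dsimp only
    split
    · rw [minusEdge_adj]
      exact ⟨hne, by rintro (⟨h1, h2⟩ | ⟨h1, h2⟩) <;> exact hne (h1.trans h2.symm)⟩
    · rename_i hA
      rw [minusEdge_adj]
      refine ⟨hne, ?_⟩
      rintro (⟨h1, h2⟩ | ⟨h1, h2⟩)
      · exact hA (h1 ▸ h2 ▸ hadj)
      · exact hA (h1 ▸ h2 ▸ hadj.symm)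
  · intro h
    have h' := h (e.symm (u, w))
    dsimp only at h'
    rw [Equiv.apply_symm_apply] at h'
    by_cases hA : G.Adj u w
    · exact hA
    · rw [if_neg hA, minusEdge_adj] at h'
      exact absurd (Or.inl ⟨rfl, rfl⟩) h'.2

lemma extend_rep {S : Type*} [Fintype S] (I : S → Set ℝ)
    (hI : ∀ s, ∃ a b : ℝ, I s = Set.Icc a b) :
    ∃ (J : S → Set ℝ) (B : ℝ),
      (∀ s, ∃ a b : ℝ, a ≤ b ∧ J s = Set.Icc a b) ∧
      (∀ s, J s ⊆ Set.Icc (-B) B) ∧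
      (∀ s t : S, s ≠ t → ((J s ∩ J t).Nonempty ↔ (I s ∩ I t).Nonempty)) := by
  classical
  choose a b hab using hI
  obtain ⟨B0, hB0⟩ := (Set.finite_range fun s => |a s| ⊔ |b s|).bddAbove
  set B1 : ℝ := max B0 0 with hB1def
  have hB1a : ∀ s, |a s| ≤ B1 := fun s =>
    le_trans (le_trans (le_max_left _ _) (hB0 ⟨s, rfl⟩)) (le_max_left _ _)
  have hB1b : ∀ s, |b s| ≤ B1 := fun s =>
    le_trans (le_trans (le_max_right _ _) (hB0 ⟨s, rfl⟩)) (le_max_left _ _)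
  have hB1nn : (0:ℝ) ≤ B1 := le_max_right _ _
  set n : ℕ := Fintype.card S with hn
  set e := Fintype.equivFin S with he
  set pt : S → ℝ := fun s => B1 + 1 + (e s : ℕ) with hpt
  have hptB : ∀ s, B1 < pt s ∧ pt s ≤ B1 + 1 + n := by
    intro s
    constructor
    · have : (0:ℝ) ≤ ((e s : ℕ) : ℝ) := Nat.cast_nonneg _
      simp only [hpt]; linarith
    · have : ((e s : ℕ) : ℝ) ≤ (n : ℝ) := by
        exact_mod_cast le_of_lt (e s).isLt
      simp only [hpt]; linarith
  have hsub : ∀ s, I s ⊆ Set.Icc (-B1) B1 := by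
    intro s
    rw [hab s]
    intro x hx
    rw [Set.mem_Icc] at hx ⊢
    constructor
    · linarith [neg_abs_le (a s), hB1a s, hx.1]
    · linarith [le_abs_self (b s), hB1b s, hx.2]
  set J : S → Set ℝ := fun s => if a s ≤ b s then I s else Set.Icc (pt s) (pt s) with hJ
  refine ⟨J, B1 + 1 + n, ?_, ?_, ?_⟩
  · intro s
    by_cases h : a s ≤ b s
    · exact ⟨a s, b s, h, by rw [hJ]; dsimp only; rw [if_pos h]; exact hab s⟩
    · exact ⟨pt s, pt s, le_refl _, by rw [hJ]; dsimp only; rw [if_neg h]⟩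
  · intro s
    rw [hJ]; dsimp only
    split
    · refine (hsub s).trans (Set.Icc_subset_Icc ?_ ?_)
      · have : (0:ℝ) ≤ (n:ℝ) := Nat.cast_nonneg _
        linarith
      · have : (0:ℝ) ≤ (n:ℝ) := Nat.cast_nonneg _
        linarith
    · intro x hx
      rw [Set.mem_Icc] at hx ⊢
      have h1 := (hptB s).1
      have h2 := (hptB s).2
      constructor <;> [linarith; linarith]
  · intro s t hst
    have hJpos : ∀ r : S, a r ≤ b r → J r = I r := fun r h => by
      rw [hJ]; dsimp only; rw [if_pos h]
    have hJneg : ∀ r : S, ¬a r ≤ b r → J r = Set.Icc (pt r) (pt r) := fun r h => by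
      rw [hJ]; dsimp only; rw [if_neg h]
    have hdisj : ∀ r r' : S, ¬a r' ≤ b r' → ¬(J r' ∩ I r).Nonempty := by
      rintro r r' h ⟨x, hx1, hx2⟩
      rw [hJneg r' h, Set.mem_Icc] at hx1
      have h1 := (hsub r hx2).2
      have h2 := (hptB r').1
      linarith [hx1.1]
    by_cases hs : a s ≤ b s <;> by_cases ht : a t ≤ b t
    · rw [hJpos s hs, hJpos t ht]
    · have hIt : I t = ∅ := by rw [hab t]; exact Set.Icc_eq_empty ht
      rw [hJpos s hs, hIt, Set.inter_empty]
      simp only [Set.not_nonempty_empty, iff_false]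
      intro hne
      exact hdisj s t ht (by rwa [Set.inter_comm] at hne)
    · have hIs : I s = ∅ := by rw [hab s]; exact Set.Icc_eq_empty hs
      rw [hJpos t ht, hIs, Set.empty_inter]
      simp only [Set.not_nonempty_empty, iff_false]
      exact hdisj t s hs
    · have hIs : I s = ∅ := by rw [hab s]; exact Set.Icc_eq_empty hs
      rw [hIs, Set.empty_inter]
      simp only [Set.not_nonempty_empty, iff_false]
      rintro ⟨x, hx1, hx2⟩
      rw [hJneg s hs, Set.mem_Icc] at hx1
      rw [hJneg t ht, Set.mem_Icc] at hx2
      have h1 : x = pt s := le_antisymm hx1.2 hx1.1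
      have h2 : x = pt t := le_antisymm hx2.2 hx2.1
      have hpp : pt s = pt t := h1 ▸ h2
      have hcast : ((e s : ℕ) : ℝ) = ((e t : ℕ) : ℝ) := by
        have := hpp
        simp only [hpt] at this
        linarith
      have : (e s : ℕ) = (e t : ℕ) := Nat.cast_injective hcast
      exact hst (e.injective (Fin.ext this))

/-- The extra coordinate graph: `v` adjacent exactly to its `G`-neighbours,
everything else complete. -/
def sepGraph {V : Type*} (G : SimpleGraph V) (v : V) : SimpleGraph V where
  Adj u w := u ≠ w ∧ ((u = v ∨ w = v) → G.Adj u w)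
  symm := ⟨by
    intro u w h
    exact ⟨h.1.symm, fun hc => (h.2 (Or.symm hc)).symm⟩⟩
  loopless := ⟨fun u h => h.1 rfl⟩

lemma sepGraph_interval {V : Type*} (G : SimpleGraph V) (v : V) :
    IsIntervalGraph (sepGraph G v) := by
  classical
  refine ⟨fun u => if u = v then Set.Icc 0 1 else if G.Adj v u then Set.Icc 0 2
      else Set.Icc 2 3, ?_, ?_⟩
  · intro u
    by_cases h1 : u = v
    · exact ⟨0, 1, if_pos h1⟩
    · by_cases h2 : G.Adj v u
      · refine ⟨0, 2, ?_⟩; dsimp only; rw [if_neg h1, if_pos h2]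
      · refine ⟨2, 3, ?_⟩; dsimp only; rw [if_neg h1, if_neg h2]
  · intro u w huw
    show (u ≠ w ∧ ((u = v ∨ w = v) → G.Adj u w)) ↔ _
    dsimp only
    by_cases hu : u = v
    · have hw : w ≠ v := fun hc => huw (hu.trans hc.symm)
      subst hu
      rw [if_pos rfl, if_neg hw]
      by_cases hA : G.Adj u w
      · rw [if_pos hA]
        constructor
        · intro _; exact ⟨0, by norm_num [Set.mem_Icc]⟩
        · intro _; exact ⟨huw, fun _ => hA⟩
      · rw [if_neg hA]
        constructor
        · intro h; exact absurd (h.2 (Or.inl rfl)) hA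
        · rintro ⟨x, hx1, hx2⟩
          rw [Set.mem_Icc] at hx1 hx2
          exfalso; linarith [hx1.2, hx2.1]
    · rw [if_neg hu]
      by_cases hw : w = v
      · subst hw
        rw [if_pos rfl]
        by_cases hA : G.Adj w u
        · rw [if_pos hA]
          constructor
          · intro _; exact ⟨0, by norm_num [Set.mem_Icc]⟩
          · intro _; exact ⟨huw, fun _ => hA.symm⟩
        · rw [if_neg hA]
          constructor
          · intro h; exact absurd (h.2 (Or.inr rfl)).symm hA
          · rintro ⟨x, hx1, hx2⟩
            rw [Set.mem_Icc] at hx1 hx2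
            exfalso; linarith [hx1.1, hx2.2]
      · rw [if_neg hw]
        constructor
        · intro _
          by_cases h1 : G.Adj v u <;> by_cases h2 : G.Adj v w <;>
            simp only [if_pos, if_neg, h1, h2, if_true, if_false]
          · exact ⟨0, by norm_num [Set.mem_Icc]⟩
          · exact ⟨2, by norm_num [Set.mem_Icc]⟩
          · exact ⟨2, by norm_num [Set.mem_Icc]⟩
          · exact ⟨2, by norm_num [Set.mem_Icc]⟩
        · intro _
          exact ⟨huw, fun hc => absurd hc (by simp [hu, hw])⟩

lemma hasBoxicityLE_succ {V : Type*} [Fintype V] (G : SimpleGraph V) (v : V) (k : ℕ)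
    (h : HasBoxicityLE (G.induce {w | w ≠ v}) k) : HasBoxicityLE G (k + 1) := by
  classical
  obtain ⟨f, hf, hiff⟩ := h
  choose I hIcc hIadj using hf
  have hext := fun i => extend_rep (I i) (hIcc i)
  choose J B hJform hJsub hJiff using hext
  set K : Fin k → V → Set ℝ := fun i u =>
    if h : u = v then Set.Icc (-(B i)) (B i) else J i ⟨u, h⟩ with hK
  have hKform : ∀ i u, ∃ a b : ℝ, K i u = Set.Icc a b := by
    intro i u
    by_cases h : u = v
    · exact ⟨-(B i), B i, by rw [hK]; dsimp only; rw [dif_pos h]⟩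
    · obtain ⟨a, b, _, hab⟩ := hJform i ⟨u, h⟩
      exact ⟨a, b, by rw [hK]; dsimp only; rw [dif_neg h]; exact hab⟩
  set g : Fin k → SimpleGraph V := fun i =>
    { Adj := fun u w => u ≠ w ∧ (K i u ∩ K i w).Nonempty
      symm := ⟨fun u w h => ⟨h.1.symm, by rw [Set.inter_comm]; exact h.2⟩⟩
      loopless := ⟨fun u h => h.1 rfl⟩ } with hg
  have hgadj : ∀ i u w, (g i).Adj u w ↔ u ≠ w ∧ (K i u ∩ K i w).Nonempty := fun _ _ _ => Iff.rfl
  have hKv : ∀ i, K i v = Set.Icc (-(B i)) (B i) := fun i => by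
    rw [hK]; dsimp only; rw [dif_pos rfl]
  have hKu : ∀ i u (h : u ≠ v), K i u = J i ⟨u, h⟩ := fun i u h => by
    rw [hK]; dsimp only; rw [dif_neg h]
  have hJne : ∀ i s, (J i s).Nonempty := by
    intro i s
    obtain ⟨a, b, hab, h⟩ := hJform i s
    rw [h]
    exact Set.nonempty_Icc.mpr hab
  have hvK : ∀ i u (h : u ≠ v), (K i v ∩ K i u).Nonempty := by
    intro i u h
    obtain ⟨x, hx⟩ := hJne i ⟨u, h⟩
    exact ⟨x, by rw [hKv]; exact hJsub i _ hx, by rw [hKu i u h]; exact hx⟩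
  refine ⟨Fin.cons (α := fun _ => SimpleGraph V) (sepGraph G v) g, ?_, ?_⟩
  · intro i
    refine Fin.cases ?_ ?_ i
    · rw [Fin.cons_zero]; exact sepGraph_interval G v
    · intro j
      rw [Fin.cons_succ]
      exact ⟨K j, hKform j, fun u w huw => ⟨fun h => h.2, fun h => ⟨huw, h⟩⟩⟩
  · intro u w
    constructor
    · intro hadj i
      have hne : u ≠ w := hadj.ne
      refine Fin.cases ?_ ?_ i
      · rw [Fin.cons_zero]
        exact ⟨hne, fun _ => hadj⟩
      · intro j
        rw [Fin.cons_succ, hgadj]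
        refine ⟨hne, ?_⟩
        by_cases hu : u = v
        · have hw : w ≠ v := fun hc => hne (hu.trans hc.symm)
          rw [hu]
          exact hvK j w hw
        · by_cases hw : w = v
          · rw [hw, Set.inter_comm]
            exact hvK j u hu
          · rw [hKu j u hu, hKu j w hw]
            have hne' : (⟨u, hu⟩ : {w | w ≠ v}) ≠ ⟨w, hw⟩ := fun hc =>
              hne (congrArg Subtype.val hc)
            rw [hJiff j _ _ hne']
            rw [← hIadj j _ _ hne']
            have : (G.induce {w | w ≠ v}).Adj ⟨u, hu⟩ ⟨w, hw⟩ := by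
              simp only [comap_adj, Function.Embedding.coe_subtype]
              exact hadj
            exact (hiff _ _).mp this j
    · intro hall
      have h0' : (sepGraph G v).Adj u w := by
        have := hall 0
        rwa [Fin.cons_zero] at this
      have hne : u ≠ w := h0'.1
      by_cases hu : u = v
      · exact h0'.2 (Or.inl hu)
      · by_cases hw : w = v
        · exact h0'.2 (Or.inr hw)
        · have hadj' : ∀ j, (f j).Adj ⟨u, hu⟩ ⟨w, hw⟩ := by
            intro j
            have hj := hall j.succ
            rw [Fin.cons_succ, hgadj] at hj
            have hne' : (⟨u, hu⟩ : {w | w ≠ v}) ≠ ⟨w, hw⟩ := fun hc =>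
              hne (congrArg Subtype.val hc)
            rw [hIadj j _ _ hne', ← hJiff j _ _ hne', ← hKu j u hu, ← hKu j w hw]
            exact hj.2
          have := (hiff _ _).mpr hadj'
          simpa only [comap_adj, Function.Embedding.coe_subtype] using this


/-- Removing a vertex decreases the boxicity by at most one:
`box(G) ≤ box(G − v) + 1`. -/
theorem boxicity_delete_vertex {V : Type*} [Fintype V] (G : SimpleGraph V)
    (v : V) :
    boxicity G ≤ boxicity (G.induce {w | w ≠ v}) + 1 := by
  classical
  haveI : Fintype ↥{w | w ≠ v} := Fintype.ofFinite _
  obtain ⟨k, hk⟩ := exists_hasBoxicityLE (G.induce {w | w ≠ v})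
  have hne : {m | HasBoxicityLE (G.induce {w | w ≠ v}) m}.Nonempty := ⟨k, hk⟩
  have hmem : HasBoxicityLE (G.induce {w | w ≠ v}) (boxicity (G.induce {w | w ≠ v})) :=
    Nat.sInf_mem hne
  exact Nat.sInf_le (hasBoxicityLE_succ G v _ hmem)
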